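/- Let ρ, σ be density matrices of the same size. Then d_H(ρ,σ)² ≤ T(ρ,σ) ≤ √2 · d_H(ρ,σ), where d_H is the quantum Hellinger distance and T is the trace distance. -/

import Mathlib

open Matrix
open scoped ComplexOrder

/-- The old Mathlib `Matrix.PosSemidef.sqrt` (removed from Mathlib), with its old definition. -/
noncomputable def Matrix.PosSemidef.sqrt {n : Type*} [Fintype n] [DecidableEq n] {A : Matrix n n ℂ}
    (hA : A.PosSemidef) : Matrix n n ℂ :=
  hA.1.eigenvectorUnitary.1 * diagonal ((↑) ∘ (√·) ∘ hA.1.eigenvalues) *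
    (star hA.1.eigenvectorUnitary : Matrix n n ℂ)

/-- The positive semidefinite square root of a matrix (junk value `0` if not PSD). -/
noncomputable def matSqrt {n : Type*} [Fintype n] [DecidableEq n] (A : Matrix n n ℂ) :
    Matrix n n ℂ :=
  @dite _ A.PosSemidef (Classical.dec _) (fun hA => Matrix.PosSemidef.sqrt hA) (fun _ => 0)

/-- The matrix absolute value `|A| = √(Aᴴ A)`. -/
noncomputable def matAbs {n : Type*} [Fintype n] [DecidableEq n] (A : Matrix n n ℂ) :
    Matrix n n ℂ :=
  Matrix.PosSemidef.sqrt (Matrix.posSemidef_conjTranspose_mul_self A)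

/-- The trace norm `‖A‖₁ = tr √(Aᴴ A)`. -/
noncomputable def traceNorm {n : Type*} [Fintype n] [DecidableEq n] (A : Matrix n n ℂ) : ℝ :=
  ((matAbs A).trace).re

/-- The trace distance `T(ρ, σ) = ½ ‖ρ - σ‖₁`. -/
noncomputable def trDist {n : Type*} [Fintype n] [DecidableEq n] (ρ σ : Matrix n n ℂ) : ℝ :=
  traceNorm (ρ - σ) / 2

/-- The quantum Hellinger distance `d_H(ρ, σ) = √(1 - tr(√ρ √σ))`. -/
noncomputable def hellingerDist {n : Type*} [Fintype n] [DecidableEq n]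
    (ρ σ : Matrix n n ℂ) : ℝ :=
  Real.sqrt (1 - ((matSqrt ρ * matSqrt σ).trace).re)

section SqrtCompat
open scoped MatrixOrder

lemma Matrix.PosSemidef.sqrt_eq_cfcSqrt {n : Type*} [Fintype n] [DecidableEq n]
    {A : Matrix n n ℂ} (hA : A.PosSemidef) : hA.sqrt = CFC.sqrt A := by
  rw [CFC.sqrt_eq_cfc, cfc_nnreal_eq_real _ A, hA.1.cfc_eq]
  simp only [IsHermitian.cfc, Matrix.PosSemidef.sqrt, Unitary.conjStarAlgAut_apply]
  congr 3
  funext i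
  simp [Real.coe_sqrt, Real.coe_toNNReal', max_eq_left (hA.eigenvalues_nonneg i)]

lemma Matrix.PosSemidef.posSemidef_sqrt {n : Type*} [Fintype n] [DecidableEq n]
    {A : Matrix n n ℂ} (hA : A.PosSemidef) : hA.sqrt.PosSemidef := by
  rw [hA.sqrt_eq_cfcSqrt]
  exact Matrix.nonneg_iff_posSemidef.mp (CFC.sqrt_nonneg A)

lemma Matrix.PosSemidef.sqrt_mul_self {n : Type*} [Fintype n] [DecidableEq n]
    {A : Matrix n n ℂ} (hA : A.PosSemidef) : hA.sqrt * hA.sqrt = A := by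
  rw [hA.sqrt_eq_cfcSqrt]
  exact CFC.sqrt_mul_sqrt_self A hA.nonneg

lemma Matrix.PosSemidef.eq_sqrt_of_sq_eq {n : Type*} [Fintype n] [DecidableEq n]
    {A B : Matrix n n ℂ} (hA : A.PosSemidef) (hB : B.PosSemidef) (hAB : A ^ 2 = B) :
    A = hB.sqrt := by
  rw [hB.sqrt_eq_cfcSqrt]
  exact (CFC.sqrt_unique (by rw [← sq]; exact hAB) hA.nonneg).symm

end SqrtCompat

section Helpers

variable {n : Type*} [Fintype n] [DecidableEq n]

/-- diagonal entries of a PSD matrix are nonneg (complex order). -/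
lemma psd_diag_nonneg {M : Matrix n n ℂ} (hM : M.PosSemidef) (i : n) :
    0 ≤ M i i := by
  have := hM.diag_nonneg (i := i)
  exact this

lemma psd_diag_re_nonneg {M : Matrix n n ℂ} (hM : M.PosSemidef) (i : n) :
    0 ≤ (M i i).re :=
  (Complex.le_def.mp (psd_diag_nonneg hM i)).1

lemma psd_trace_re_nonneg {M : Matrix n n ℂ} (hM : M.PosSemidef) :
    0 ≤ M.trace.re := by
  rw [Matrix.trace]
  simp only [Complex.re_sum]
  exact Finset.sum_nonneg fun i _ => psd_diag_re_nonneg hM i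

lemma matAbs_herm (X : Matrix n n ℂ) (hX : X.IsHermitian) :
    matAbs X = (hX.eigenvectorUnitary : Matrix n n ℂ) *
      diagonal (fun j => Complex.ofReal |hX.eigenvalues j|) *
      (hX.eigenvectorUnitary : Matrix n n ℂ)ᴴ := by
  set W : Matrix n n ℂ := (hX.eigenvectorUnitary : Matrix n n ℂ) with hW
  have hWW : Wᴴ * W = 1 := by
    rw [← Matrix.star_eq_conjTranspose]
    exact Unitary.coe_star_mul_self hX.eigenvectorUnitary
  set P : Matrix n n ℂ := W * diagonal (fun j => Complex.ofReal |hX.eigenvalues j|) * Wᴴ with hP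
  have hPsd : P.PosSemidef := by
    apply Matrix.PosSemidef.mul_mul_conjTranspose_same
    refine Matrix.posSemidef_diagonal_iff.mpr fun i => ?_
    exact Complex.zero_le_real.mpr (abs_nonneg _)
  have hspec : X = W * diagonal (RCLike.ofReal ∘ hX.eigenvalues) * Wᴴ := by
    simpa [Matrix.star_eq_conjTranspose] using hX.spectral_theorem
  have hsq : P ^ 2 = Xᴴ * X := by
    have h1 : P ^ 2 = W * (diagonal (fun j => Complex.ofReal |hX.eigenvalues j|) * (Wᴴ * W) *
        diagonal (fun j => Complex.ofReal |hX.eigenvalues j|)) * Wᴴ := by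
      rw [pow_two, hP]; noncomm_ring
    have h2 : Xᴴ * X = W * (diagonal (RCLike.ofReal ∘ hX.eigenvalues) * (Wᴴ * W) *
        diagonal (RCLike.ofReal ∘ hX.eigenvalues)) * Wᴴ := by
      rw [hX.eq]
      conv_lhs => rw [hspec]
      noncomm_ring
    rw [h1, h2, hWW, mul_one, mul_one, Matrix.diagonal_mul_diagonal,
      Matrix.diagonal_mul_diagonal]
    congr 2
    funext j
    simp [Function.comp, ← Complex.ofReal_mul, abs_mul_abs_self]
  exact (hPsd.eq_sqrt_of_sq_eq (Matrix.posSemidef_conjTranspose_mul_self X) hsq).symm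

lemma traceNorm_herm_eq (X : Matrix n n ℂ) (hX : X.IsHermitian) :
    ((matAbs X).trace).re = ∑ j, |hX.eigenvalues j| := by
  rw [matAbs_herm X hX]
  set W : Matrix n n ℂ := (hX.eigenvectorUnitary : Matrix n n ℂ) with hW
  have hWW : Wᴴ * W = 1 := by
    rw [← Matrix.star_eq_conjTranspose]
    exact Unitary.coe_star_mul_self hX.eigenvectorUnitary
  rw [Matrix.trace_mul_cycle, hWW, one_mul, Matrix.trace_diagonal]
  simp [Complex.re_sum]

lemma sum_abs_diag_le (X : Matrix n n ℂ) (hX : X.IsHermitian)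
    (V : Matrix n n ℂ) (hV : V ∈ Matrix.unitaryGroup n ℂ) :
    ∑ i, ‖(Vᴴ * X * V) i i‖ ≤ ((matAbs X).trace).re := by
  rw [traceNorm_herm_eq X hX]
  set W : Matrix n n ℂ := (hX.eigenvectorUnitary : Matrix n n ℂ) with hWdef
  set Q : Matrix n n ℂ := Wᴴ * V with hQdef
  have hWW : Wᴴ * W = 1 := by
    rw [← Matrix.star_eq_conjTranspose]
    exact Unitary.coe_star_mul_self hX.eigenvectorUnitary
  have hV1 : V * Vᴴ = 1 := by
    rw [← Matrix.star_eq_conjTranspose]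
    exact (Matrix.mem_unitaryGroup_iff).mp hV
  have hQ1 : Q * Qᴴ = 1 := by
    rw [hQdef, Matrix.conjTranspose_mul, Matrix.conjTranspose_conjTranspose]
    calc Wᴴ * V * (Vᴴ * W) = Wᴴ * (V * Vᴴ) * W := by noncomm_ring
    _ = 1 := by rw [hV1, mul_one, hWW]
  have hQrow : ∀ j, ∑ i, ‖Q j i‖ ^ 2 = 1 := by
    intro j
    have h1 : (Q * Qᴴ) j j = 1 := by rw [hQ1]; simp
    have h2 : (Q * Qᴴ) j j = ∑ i, (‖Q j i‖ ^ 2 : ℂ) := by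
      simp only [Matrix.mul_apply, Matrix.conjTranspose_apply]
      refine Finset.sum_congr rfl fun i _ => ?_
      rw [Complex.star_def, Complex.mul_conj]
      norm_cast
      exact (Complex.sq_norm _).symm
    have h3 := h2 ▸ h1
    exact_mod_cast h3
  have hspec : X = W * diagonal (RCLike.ofReal ∘ hX.eigenvalues) * Wᴴ := by
    simpa [Matrix.star_eq_conjTranspose] using hX.spectral_theorem
  have hconj : Vᴴ * X * V = Qᴴ * (diagonal (RCLike.ofReal ∘ hX.eigenvalues) * Q) := by
    conv_lhs => rw [hspec]
    rw [hQdef]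
    simp only [Matrix.conjTranspose_mul, Matrix.conjTranspose_conjTranspose]
    noncomm_ring
  have hentry : ∀ i, (Vᴴ * X * V) i i
      = ∑ j, star (Q j i) * ((hX.eigenvalues j : ℂ) * Q j i) := by
    intro i
    rw [hconj, Matrix.mul_apply]
    simp only [Matrix.diagonal_mul, Matrix.conjTranspose_apply, Function.comp_apply]
    rfl
  calc ∑ i, ‖(Vᴴ * X * V) i i‖
      ≤ ∑ i, ∑ j, |hX.eigenvalues j| * ‖Q j i‖ ^ 2 := by
        refine Finset.sum_le_sum fun i _ => ?_
        rw [hentry i]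
        refine (norm_sum_le _ _).trans ?_
        refine le_of_eq (Finset.sum_congr rfl fun j _ => ?_)
        rw [Complex.star_def, norm_mul, norm_mul, Complex.norm_conj,
          Complex.norm_real, Real.norm_eq_abs, sq]
        ring
    _ = ∑ j, |hX.eigenvalues j| * ∑ i, ‖Q j i‖ ^ 2 := by
        rw [Finset.sum_comm]
        simp [Finset.mul_sum]
    _ = ∑ j, |hX.eigenvalues j| := by
        simp [hQrow]

lemma herm_conj_frobenius (M W : Matrix n n ℂ) (hM : M.IsHermitian) (hW : W * Wᴴ = 1) :
    ∑ j, ∑ k, ‖(Wᴴ * M * W) j k‖ ^ 2 = ((M * M).trace).re := by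
  set M' : Matrix n n ℂ := Wᴴ * M * W with hM'def
  have hM' : M'.IsHermitian := Matrix.isHermitian_conjTranspose_mul_mul W hM
  have htr : (M' * M').trace = (M * M).trace := by
    have : M' * M' = Wᴴ * (M * M) * W := by
      rw [hM'def]
      calc Wᴴ * M * W * (Wᴴ * M * W) = Wᴴ * (M * (W * Wᴴ) * M) * W := by noncomm_ring
      _ = Wᴴ * (M * M) * W := by rw [hW, mul_one]
    rw [this, Matrix.trace_mul_cycle, ← mul_assoc, hW, one_mul]
  have hdiag : ∀ j, ((M' * M') j j) = ∑ k, (‖M' j k‖ ^ 2 : ℂ) := by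
    intro j
    rw [Matrix.mul_apply]
    refine Finset.sum_congr rfl fun k _ => ?_
    have hkj : M' k j = star (M' j k) := (hM'.apply k j).symm
    rw [hkj, Complex.star_def, Complex.mul_conj]
    norm_cast
    exact (Complex.sq_norm _).symm
  have : (M' * M').trace = ∑ j, ∑ k, (‖M' j k‖ ^ 2 : ℂ) := by
    rw [Matrix.trace]
    exact Finset.sum_congr rfl fun j _ => hdiag j
  rw [← htr, this]
  norm_cast

lemma traceNorm_anticomm_le (C D X : Matrix n n ℂ) (hC : C.IsHermitian) (hD : D.IsHermitian)
    (hX : X.IsHermitian) (hsum : C * D + D * C = X + X) :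
    ((matAbs X).trace).re ≤
      Real.sqrt ((C * C).trace.re) * Real.sqrt ((D * D).trace.re) := by
  rw [traceNorm_herm_eq X hX]
  set W : Matrix n n ℂ := (hX.eigenvectorUnitary : Matrix n n ℂ) with hWdef
  have hWW : Wᴴ * W = 1 := by
    rw [← Matrix.star_eq_conjTranspose]
    exact Unitary.coe_star_mul_self hX.eigenvectorUnitary
  have hWW' : W * Wᴴ = 1 := by
    rw [← Matrix.star_eq_conjTranspose]
    exact Unitary.coe_mul_star_self hX.eigenvectorUnitary
  set C' : Matrix n n ℂ := Wᴴ * C * W with hC'def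
  set D' : Matrix n n ℂ := Wᴴ * D * W with hD'def
  have hC' : C'.IsHermitian := Matrix.isHermitian_conjTranspose_mul_mul W hC
  have hD' : D'.IsHermitian := Matrix.isHermitian_conjTranspose_mul_mul W hD
  have hdiagX : Wᴴ * X * W = diagonal (RCLike.ofReal ∘ hX.eigenvalues) := by
    simpa [Matrix.star_eq_conjTranspose] using hX.conjStarAlgAut_star_eigenvectorUnitary
  have hanti : C' * D' + D' * C'
      = diagonal (RCLike.ofReal ∘ hX.eigenvalues) + diagonal (RCLike.ofReal ∘ hX.eigenvalues) := by
    rw [← hdiagX, hC'def, hD'def]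
    calc Wᴴ * C * W * (Wᴴ * D * W) + Wᴴ * D * W * (Wᴴ * C * W)
        = Wᴴ * (C * (W * Wᴴ) * D) * W + Wᴴ * (D * (W * Wᴴ) * C) * W := by noncomm_ring
      _ = Wᴴ * (C * D + D * C) * W := by rw [hWW']; noncomm_ring
      _ = Wᴴ * (X + X) * W := by rw [hsum]
      _ = Wᴴ * X * W + Wᴴ * X * W := by noncomm_ring
  -- per-eigenvalue bound
  have hper : ∀ j, |hX.eigenvalues j|
      ≤ ∑ k, ‖C' j k‖ * ‖D' j k‖ := by
    intro j
    set z : ℂ := ∑ k, C' j k * D' k j with hz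
    have hjj := congrFun (congrFun hanti j) j
    simp only [Matrix.add_apply, Matrix.mul_apply, Matrix.diagonal_apply_eq,
      Function.comp_apply] at hjj
    have hstar : star z = ∑ k, D' j k * C' k j := by
      rw [hz, star_sum]
      refine Finset.sum_congr rfl fun k _ => ?_
      rw [star_mul', hD'.apply j k, hC'.apply k j]
      ring
    rw [← hz, ← hstar] at hjj
    have h2 : hX.eigenvalues j = z.re := by
      have h3 := congrArg Complex.re hjj
      simp only [Complex.add_re, Complex.star_def, Complex.conj_re,
        RCLike.ofReal_re, Complex.ofReal_re] at h3
      simp at h3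
      linarith
    rw [h2]
    calc |z.re| ≤ ‖z‖ := Complex.abs_re_le_norm z
      _ ≤ ∑ k, ‖C' j k * D' k j‖ := norm_sum_le _ _
      _ = ∑ k, ‖C' j k‖ * ‖D' j k‖ := by
          refine Finset.sum_congr rfl fun k _ => ?_
          rw [norm_mul]
          congr 1
          have e1 : D' k j = star (D' j k) := (hD'.apply k j).symm
          rw [e1, Complex.star_def, Complex.norm_conj]
  -- sum up and Cauchy-Schwarz
  have hCS : ∑ j, |hX.eigenvalues j|
      ≤ Real.sqrt (∑ j, ∑ k, ‖C' j k‖ ^ 2) *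
        Real.sqrt (∑ j, ∑ k, ‖D' j k‖ ^ 2) := by
    calc ∑ j, |hX.eigenvalues j|
        ≤ ∑ j, ∑ k, ‖C' j k‖ * ‖D' j k‖ :=
          Finset.sum_le_sum fun j _ => hper j
      _ = ∑ p : n × n, ‖C' p.1 p.2‖ * ‖D' p.1 p.2‖ := by
          rw [← Finset.sum_product', Finset.univ_product_univ]
      _ ≤ Real.sqrt (∑ p : n × n, ‖C' p.1 p.2‖ ^ 2) *
          Real.sqrt (∑ p : n × n, ‖D' p.1 p.2‖ ^ 2) := by
          have hnn : (0:ℝ) ≤ ∑ p : n × n, ‖C' p.1 p.2‖ * ‖D' p.1 p.2‖ :=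
            Finset.sum_nonneg fun p _ =>
              mul_nonneg (norm_nonneg _) (norm_nonneg _)
          have := Finset.sum_mul_sq_le_sq_mul_sq Finset.univ
            (fun p : n × n => ‖C' p.1 p.2‖)
            (fun p : n × n => ‖D' p.1 p.2‖)
          calc ∑ p : n × n, ‖C' p.1 p.2‖ * ‖D' p.1 p.2‖
              = Real.sqrt ((∑ p : n × n, ‖C' p.1 p.2‖ * ‖D' p.1 p.2‖) ^ 2) :=
                (Real.sqrt_sq hnn).symm
            _ ≤ Real.sqrt ((∑ p : n × n, ‖C' p.1 p.2‖ ^ 2) *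
                  ∑ p : n × n, ‖D' p.1 p.2‖ ^ 2) := Real.sqrt_le_sqrt this
            _ = _ := Real.sqrt_mul (Finset.sum_nonneg fun p _ => sq_nonneg _) _
      _ = _ := by rw [← Finset.sum_product', ← Finset.sum_product',
            Finset.univ_product_univ]
  rw [herm_conj_frobenius C W hC hWW', herm_conj_frobenius D W hD hWW'] at hCS
  exact hCS

lemma herm_trace_sq_eq (C : Matrix n n ℂ) (hC : C.IsHermitian) :
    ((C * C).trace).re = ∑ j, hC.eigenvalues j ^ 2 := by
  set U : Matrix n n ℂ := (hC.eigenvectorUnitary : Matrix n n ℂ) with hUdef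
  have hUU' : U * Uᴴ = 1 := by
    rw [← Matrix.star_eq_conjTranspose]
    exact Unitary.coe_mul_star_self hC.eigenvectorUnitary
  have hdiagC : Uᴴ * C * U = diagonal (RCLike.ofReal ∘ hC.eigenvalues) := by
    simpa [Matrix.star_eq_conjTranspose] using hC.conjStarAlgAut_star_eigenvectorUnitary
  have h := herm_conj_frobenius C U hC hUU'
  rw [hdiagC] at h
  rw [← h]
  refine Finset.sum_congr rfl fun j _ => ?_
  rw [Finset.sum_eq_single j]
  · simp [Matrix.diagonal_apply_eq, Function.comp, Complex.norm_real, sq_abs]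
  · intro k _ hk
    simp [Matrix.diagonal_apply_ne _ (Ne.symm hk)]
  · simp

lemma powers_stormer (A B : Matrix n n ℂ) (hA : A.PosSemidef) (hB : B.PosSemidef) :
    (((A - B) * (A - B)).trace).re ≤ ((matAbs (A * A - B * B)).trace).re := by
  set C : Matrix n n ℂ := A - B with hCdef
  set D : Matrix n n ℂ := A + B with hDdef
  set X : Matrix n n ℂ := A * A - B * B with hXdef
  have hC : C.IsHermitian := hA.1.sub hB.1
  have hX : X.IsHermitian := by
    refine Matrix.IsHermitian.sub ?_ ?_
    · rw [Matrix.IsHermitian, Matrix.conjTranspose_mul, hA.1.eq]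
    · rw [Matrix.IsHermitian, Matrix.conjTranspose_mul, hB.1.eq]
  set U : Matrix n n ℂ := (hC.eigenvectorUnitary : Matrix n n ℂ) with hUdef
  have hUmem : U ∈ Matrix.unitaryGroup n ℂ := hC.eigenvectorUnitary.2
  have hUU' : U * Uᴴ = 1 := by
    rw [← Matrix.star_eq_conjTranspose]
    exact Unitary.coe_mul_star_self hC.eigenvectorUnitary
  have hdiagC : Uᴴ * C * U = diagonal (RCLike.ofReal ∘ hC.eigenvalues) := by
    simpa [Matrix.star_eq_conjTranspose] using hC.conjStarAlgAut_star_eigenvectorUnitary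
  set d : Matrix n n ℂ := Uᴴ * D * U with hddef
  -- d ± diagonal λ are PSD
  have hplus : (d + diagonal (RCLike.ofReal ∘ hC.eigenvalues)).PosSemidef := by
    rw [← hdiagC]
    have : d + Uᴴ * C * U = Uᴴ * (A + A) * U := by
      rw [hddef, hDdef, hCdef]; noncomm_ring
    rw [this]
    exact (hA.add hA).conjTranspose_mul_mul_same U
  have hminus : (d - diagonal (RCLike.ofReal ∘ hC.eigenvalues)).PosSemidef := by
    rw [← hdiagC]
    have : d - Uᴴ * C * U = Uᴴ * (B + B) * U := by
      rw [hddef, hDdef, hCdef]; noncomm_ring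
    rw [this]
    exact (hB.add hB).conjTranspose_mul_mul_same U
  have habs_le : ∀ i, |hC.eigenvalues i| ≤ (d i i).re := by
    intro i
    have h1 := psd_diag_re_nonneg hplus i
    have h2 := psd_diag_re_nonneg hminus i
    simp only [Matrix.add_apply, Matrix.sub_apply, Matrix.diagonal_apply_eq,
      Function.comp_apply, Complex.add_re, Complex.sub_re, RCLike.ofReal_re] at h1 h2
    rw [abs_le]
    constructor <;> simp at h1 h2 <;> linarith
  -- diagonal entries of Uᴴ X U
  have hCDDC : C * D + D * C = X + X := by
    rw [hCdef, hDdef, hXdef]; noncomm_ring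
  have hanti : (Uᴴ * X * U) + (Uᴴ * X * U)
      = diagonal (RCLike.ofReal ∘ hC.eigenvalues) * d
        + d * diagonal (RCLike.ofReal ∘ hC.eigenvalues) := by
    rw [← hdiagC, hddef]
    calc Uᴴ * X * U + Uᴴ * X * U
        = Uᴴ * (X + X) * U := by noncomm_ring
      _ = Uᴴ * (C * D + D * C) * U := by rw [hCDDC]
      _ = Uᴴ * C * (U * Uᴴ) * D * U + Uᴴ * D * (U * Uᴴ) * C * U := by
          rw [hUU']; noncomm_ring
      _ = Uᴴ * C * U * (Uᴴ * D * U) + Uᴴ * D * U * (Uᴴ * C * U) := by noncomm_ring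
  have hentry : ∀ i, (Uᴴ * X * U) i i = (hC.eigenvalues i : ℂ) * d i i := by
    intro i
    have hjj := congrFun (congrFun hanti i) i
    simp only [Matrix.add_apply, Matrix.diagonal_mul, Matrix.mul_diagonal,
      Function.comp_apply] at hjj
    have hcoe : (RCLike.ofReal (hC.eigenvalues i) : ℂ) = ((hC.eigenvalues i : ℝ) : ℂ) := rfl
    rw [hcoe] at hjj
    linear_combination hjj / 2
  -- d i i is real nonneg
  have hd : d.PosSemidef := by
    rw [hddef, hDdef]
    exact (hA.add hB).conjTranspose_mul_mul_same U
  have habsd : ∀ i, ‖d i i‖ = (d i i).re := by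
    intro i
    have := psd_diag_nonneg hd i
    rw [Complex.le_def] at this
    rw [Complex.norm_def, Complex.normSq_apply, ← this.2]
    simp [Real.sqrt_mul_self this.1]
  calc (((A - B) * (A - B)).trace).re = ((C * C).trace).re := by rw [← hCdef]
    _ = ∑ j, hC.eigenvalues j ^ 2 := herm_trace_sq_eq C hC
    _ ≤ ∑ i, ‖(Uᴴ * X * U) i i‖ := by
        refine Finset.sum_le_sum fun i _ => ?_
        rw [hentry i, norm_mul, Complex.norm_real, Real.norm_eq_abs, habsd i]
        calc hC.eigenvalues i ^ 2 = |hC.eigenvalues i| * |hC.eigenvalues i| := by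
              rw [abs_mul_abs_self, sq]
          _ ≤ |hC.eigenvalues i| * (d i i).re := by
              have := habs_le i
              have h0 : (0:ℝ) ≤ |hC.eigenvalues i| := abs_nonneg _
              nlinarith
    _ ≤ ((matAbs X).trace).re := sum_abs_diag_le X hX U hUmem

theorem hellinger_aux {n : Type*} [Fintype n] [DecidableEq n]
    (ρ σ : Matrix n n ℂ) (hρ : ρ.PosSemidef) (hρ1 : ρ.trace = 1)
    (hσ : σ.PosSemidef) (hσ1 : σ.trace = 1) :
    Real.sqrt (1 - ((hρ.sqrt * hσ.sqrt).trace).re) ^ 2 ≤ ((matAbs (ρ - σ)).trace).re / 2 ∧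
      ((matAbs (ρ - σ)).trace).re / 2
        ≤ Real.sqrt 2 * Real.sqrt (1 - ((hρ.sqrt * hσ.sqrt).trace).re) := by
  set A : Matrix n n ℂ := hρ.sqrt with hAdef
  set B : Matrix n n ℂ := hσ.sqrt with hBdef
  have hA : A.PosSemidef := hρ.posSemidef_sqrt
  have hB : B.PosSemidef := hσ.posSemidef_sqrt
  have hAsq : A * A = ρ := hρ.sqrt_mul_self
  have hBsq : B * B = σ := hσ.sqrt_mul_self
  set t : ℝ := ((A * B).trace).re with htdef
  -- t ≥ 0
  have ht0 : 0 ≤ t := by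
    set R : Matrix n n ℂ := hA.sqrt with hRdef
    have hR : R.PosSemidef := hA.posSemidef_sqrt
    have hRsq : R * R = A := hA.sqrt_mul_self
    have hpsd : (R * B * R).PosSemidef := by
      have := hB.mul_mul_conjTranspose_same R
      rwa [hR.1.eq] at this
    have htr : (A * B).trace = (R * B * R).trace := by
      rw [← hRsq]
      exact (Matrix.trace_mul_cycle R B R).symm
    rw [htdef, htr]
    exact psd_trace_re_nonneg hpsd
  set C : Matrix n n ℂ := A - B with hCdef
  set D : Matrix n n ℂ := A + B with hDdef
  have hC : C.IsHermitian := hA.1.sub hB.1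
  have hD : D.IsHermitian := hA.1.add hB.1
  have hXeq : ρ - σ = A * A - B * B := by rw [hAsq, hBsq]
  have hXherm : (A * A - B * B).IsHermitian := by
    refine Matrix.IsHermitian.sub ?_ ?_
    · rw [Matrix.IsHermitian, Matrix.conjTranspose_mul, hA.1.eq]
    · rw [Matrix.IsHermitian, Matrix.conjTranspose_mul, hB.1.eq]
  have hs : ((C * C).trace).re = 2 - 2 * t := by
    have hcc : C * C = A * A + B * B - (A * B + B * A) := by
      rw [hCdef]; noncomm_ring
    rw [hcc, Matrix.trace_sub, Matrix.trace_add, Matrix.trace_add, hAsq, hBsq, hρ1, hσ1,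
      Matrix.trace_mul_comm B A]
    simp [Complex.sub_re, Complex.add_re, htdef]
    ring
  have hu : ((D * D).trace).re = 2 + 2 * t := by
    have hdd : D * D = A * A + B * B + (A * B + B * A) := by
      rw [hDdef]; noncomm_ring
    rw [hdd, Matrix.trace_add, Matrix.trace_add, Matrix.trace_add, hAsq, hBsq, hρ1, hσ1,
      Matrix.trace_mul_comm B A]
    simp [Complex.add_re, htdef]
    ring
  have hs0 : 0 ≤ 2 - 2 * t := by
    rw [← hs, herm_trace_sq_eq C hC]
    exact Finset.sum_nonneg fun j _ => sq_nonneg _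
  have ht1 : t ≤ 1 := by linarith
  have h1t : 0 ≤ 1 - t := by linarith
  constructor
  · -- lower bound
    have hPS := powers_stormer A B hA hB
    rw [hs] at hPS
    rw [Real.sq_sqrt h1t, hXeq]
    linarith
  · -- upper bound
    have hsum : C * D + D * C = (A * A - B * B) + (A * A - B * B) := by
      rw [hCdef, hDdef]; noncomm_ring
    have hup := traceNorm_anticomm_le C D (A * A - B * B) hC hD hXherm hsum
    rw [hs, hu] at hup
    have h2u : Real.sqrt (2 + 2 * t) ≤ 2 := by
      have h41 : Real.sqrt (2 + 2 * t) ≤ Real.sqrt 4 := Real.sqrt_le_sqrt (by linarith)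
      have h42 : Real.sqrt 4 = 2 := by
        rw [show (4:ℝ) = 2^2 by norm_num, Real.sqrt_sq (by norm_num : (0:ℝ) ≤ 2)]
      linarith
    have hfin : ((matAbs (A * A - B * B)).trace).re ≤ Real.sqrt (2 - 2 * t) * 2 :=
      hup.trans (mul_le_mul_of_nonneg_left h2u (Real.sqrt_nonneg _))
    rw [hXeq]
    have : Real.sqrt (2 - 2 * t) = Real.sqrt 2 * Real.sqrt (1 - t) := by
      rw [← Real.sqrt_mul (by norm_num : (0:ℝ) ≤ 2)]
      ring_nf
    linarith [hfin, this ▸ hfin]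

end Helpers

/-- `d_H(ρ,σ)² ≤ T(ρ,σ) ≤ √2 · d_H(ρ,σ)`. -/
theorem hellinger_le_trDist_le {n : Type*} [Fintype n] [DecidableEq n]
    (ρ σ : Matrix n n ℂ) (hρ : ρ.PosSemidef) (hρ1 : ρ.trace = 1)
    (hσ : σ.PosSemidef) (hσ1 : σ.trace = 1) :
    hellingerDist ρ σ ^ 2 ≤ trDist ρ σ ∧ trDist ρ σ ≤ Real.sqrt 2 * hellingerDist ρ σ := by
  have e1 : matSqrt ρ = hρ.sqrt := by
    simp only [matSqrt]
    exact dif_pos hρ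
  have e2 : matSqrt σ = hσ.sqrt := by
    simp only [matSqrt]
    exact dif_pos hσ
  have h := hellinger_aux ρ σ hρ hρ1 hσ hσ1
  constructor
  · have := h.1
    rw [hellingerDist, trDist, traceNorm, e1, e2]
    exact this
  · have := h.2
    rw [hellingerDist, trDist, traceNorm, e1, e2]
    exact this
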